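/- Let n ≥ 3, let V = {0,1,…,n−1} with the natural order, and let Q be a partial quasi-pairing of V. If {0, 1} ∈ Q and v̂_Q = 0, then V ∖ {1} is a nontrivial module of Inv(underline(n), Q); in particular, Inv(underline(n), Q) is decomposable. -/

import Mathlib

open Set

/-- The arc relation of the tournament `Inv(underline(V), P)` obtained from the
transitive tournament on a linearly ordered type by reversing the arcs `(x,y)`
with `{x,y} ∈ P`. -/
def InvArc {α : Type*} [LinearOrder α] (P : Set (Set α)) (x y : α) : Prop :=
  (x < y ∧ ({x, y} : Set α) ∉ P) ∨ (y < x ∧ ({x, y} : Set α) ∈ P)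

/-- `M` is a module of the subtournament of `Inv(·, P)` induced on the vertex set `W`. -/
def IsModuleOn {α : Type*} [LinearOrder α] (P : Set (Set α)) (W M : Set α) : Prop :=
  M ⊆ W ∧ ∀ v ∈ W, v ∉ M →
    (∀ x ∈ M, InvArc P v x) ∨ (∀ x ∈ M, InvArc P x v)

/-- A subset of the vertex set `W` is trivial if it is empty, a singleton, or all of `W`. -/
def IsTrivialSubset {α : Type*} (W M : Set α) : Prop :=
  M = ∅ ∨ (∃ a, M = {a}) ∨ M = W

/-- A nontrivial module of the tournament `Inv(·, P)` induced on `W`. -/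
def IsNontrivialModuleOn {α : Type*} [LinearOrder α] (P : Set (Set α)) (W M : Set α) : Prop :=
  IsModuleOn P W M ∧ ¬ IsTrivialSubset W M

/-- The tournament `Inv(·, P)` induced on `W` is indecomposable: all its modules are trivial. -/
def IndecomposableOn {α : Type*} [LinearOrder α] (P : Set (Set α)) (W : Set α) : Prop :=
  ∀ M : Set α, IsModuleOn P W M → IsTrivialSubset W M

/-- The tournament `Inv(·, P)` induced on `W` is decomposable: it has a nontrivial module. -/
def DecomposableOn {α : Type*} [LinearOrder α] (P : Set (Set α)) (W : Set α) : Prop :=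
  ∃ M : Set α, IsNontrivialModuleOn P W M

/-- A co-module of the tournament `Inv(·, P)` on `W`: a subset `M` of `W` such that
`M` or `W ∖ M` is a nontrivial module. -/
def IsCoModuleOn {α : Type*} [LinearOrder α] (P : Set (Set α)) (W M : Set α) : Prop :=
  M ⊆ W ∧ (IsNontrivialModuleOn P W M ∨ IsNontrivialModuleOn P W (W \ M))

/-- `mc(underline(W))`: the family of minimal co-modules of the transitive tournament on `W`
(a minimal co-module contains no other co-module). -/
def mcOn {α : Type*} [LinearOrder α] (W : Set α) : Set (Set α) :=
  {M | IsCoModuleOn (∅ : Set (Set α)) W M ∧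
    ∀ C : Set α, IsCoModuleOn (∅ : Set (Set α)) W C → C ⊆ M → C = M}

/-- `S` is a transversal of the family `F`: it meets every member of `F`. -/
def TransversalOf {α : Type*} (S : Set α) (F : Set (Set α)) : Prop :=
  ∀ C ∈ F, (S ∩ C).Nonempty

/-- A partial pairing of `V`: a set of pairwise disjoint 2-element subsets of `V`. -/
def IsPartialPairingOn {α : Type*} (V : Set α) (P : Set (Set α)) : Prop :=
  (∀ B ∈ P, B ⊆ V ∧ B.ncard = 2) ∧
  ∀ B ∈ P, ∀ C ∈ P, B ≠ C → Disjoint B C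

/-- `I` is an interval of the totally ordered set `X`: every element of `X ∖ I` is greater
than all elements of `I` or smaller than all of them. -/
def IsIntervalOf {α : Type*} [LinearOrder α] (X I : Set α) : Prop :=
  I ⊆ X ∧ ∀ v ∈ X \ I, (∀ i ∈ I, v < i) ∨ (∀ i ∈ I, i < v)

/-- A nontrivial interval of `X`. -/
def IsNontrivialIntervalOf {α : Type*} [LinearOrder α] (X I : Set α) : Prop :=
  IsIntervalOf X I ∧ ¬ IsTrivialSubset X I

/-- A family of blocks `P` on the totally ordered set `X` is irreducible if no nontrivial
interval of `X` is a union of blocks of `P`. -/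
def IrreducibleOn {α : Type*} [LinearOrder α] (X : Set α) (P : Set (Set α)) : Prop :=
  ∀ R ⊆ P, ¬ IsNontrivialIntervalOf X (⋃₀ R)

/-- A partial quasi-pairing of `V`: a set `Q` of `m+1` two-element subsets of `V` (`m ≥ 1`)
whose union has size `2m+1`. -/
def IsPartialQuasiPairingOn {α : Type*} (V : Set α) (Q : Set (Set α)) : Prop :=
  (∀ B ∈ Q, B ⊆ V ∧ B.ncard = 2) ∧
  ∃ m : ℕ, 1 ≤ m ∧ (⋃₀ Q).ncard = 2 * m + 1 ∧ Q.ncard = m + 1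

/-- The distinguished data of a quasi-pairing `Q`: `vh = v̂_Q` is the element lying in the two
blocks `{vh, vm}` and `{vh, vp}` of `Q`, with `vm = v_Q^- < v_Q^+ = vp`. -/
def QPData {α : Type*} [LinearOrder α] (Q : Set (Set α)) (vh vm vp : α) : Prop :=
  ({vh, vm} : Set α) ∈ Q ∧ ({vh, vp} : Set α) ∈ Q ∧ vm < vp

/-- `Q_part`: the partition of `⋃₀ Q` obtained from `Q` by merging its two intersecting
blocks into `B_Q = {v̂_Q, v_Q^-, v_Q^+}`. -/
def QPart {α : Type*} [LinearOrder α] (Q : Set (Set α)) (vh vm vp : α) : Set (Set α) :=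
  (Q \ {({vh, vm} : Set α), ({vh, vp} : Set α)}) ∪ {({vh, vm, vp} : Set α)}

lemma sUnion_ncard_le_two_mul (S : Set (Set ℕ)) (hS : S.Finite) :
    (∀ B ∈ S, B.Finite ∧ B.ncard ≤ 2) →
    (⋃₀ S).Finite ∧ (⋃₀ S).ncard ≤ 2 * S.ncard := by
  refine Set.Finite.induction_on (motive := fun S _ => (∀ B ∈ S, B.Finite ∧ B.ncard ≤ 2) →
    (⋃₀ S).Finite ∧ (⋃₀ S).ncard ≤ 2 * S.ncard) S hS (by simp) ?_
  intro B S hB hSfin ih h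
  have hB2 := h B (mem_insert _ _)
  have ihs := ih (fun C hC => h C (mem_insert_of_mem _ hC))
  constructor
  · rw [sUnion_insert]; exact hB2.1.union ihs.1
  · rw [sUnion_insert, Set.ncard_insert_of_notMem hB hSfin]
    calc (B ∪ ⋃₀ S).ncard ≤ B.ncard + (⋃₀ S).ncard := Set.ncard_union_le _ _
      _ ≤ 2 + 2 * S.ncard := by omega
      _ = 2 * (S.ncard + 1) := by ring

lemma key_no_block (Q : Set (Set ℕ)) (m : ℕ) (hm : 1 ≤ m)
    (hcard2 : ∀ B ∈ Q, B.ncard = 2)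
    (hU : (⋃₀ Q).ncard = 2 * m + 1) (hQc : Q.ncard = m + 1)
    (vm vp : ℕ) (hvm : ({0, vm} : Set ℕ) ∈ Q) (hvp : ({0, vp} : Set ℕ) ∈ Q)
    (hlt : vm < vp) (h01 : ({0, 1} : Set ℕ) ∈ Q)
    (x : ℕ) (hx : 2 ≤ x) : ({1, x} : Set ℕ) ∉ Q := by
  intro hB4
  have hQfin : Q.Finite := Set.finite_of_ncard_ne_zero (by omega)
  have hvp1 : vp ≠ 1 := by
    intro h
    have hvm0 : vm = 0 := by omega
    have h2 := hcard2 _ hvm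
    rw [hvm0] at h2
    simp at h2
  -- distinctness facts
  have hx0 : x ≠ 0 := by omega
  have hx1 : x ≠ 1 := by omega
  have hne24 : ({0, vp} : Set ℕ) ≠ ({1, x} : Set ℕ) := by
    intro h
    have : (0 : ℕ) ∈ ({1, x} : Set ℕ) := h ▸ (by simp : (0:ℕ) ∈ ({0,vp}:Set ℕ))
    simp at this; omega
  have hne14 : ({0, vm} : Set ℕ) ≠ ({1, x} : Set ℕ) := by
    intro h
    have : (0 : ℕ) ∈ ({1, x} : Set ℕ) := h ▸ (by simp : (0:ℕ) ∈ ({0,vm}:Set ℕ))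
    simp at this; omega
  have hne34 : ({0, 1} : Set ℕ) ≠ ({1, x} : Set ℕ) := by
    intro h
    have : (0 : ℕ) ∈ ({1, x} : Set ℕ) := h ▸ (by simp : (0:ℕ) ∈ ({0,1}:Set ℕ))
    simp at this; omega
  have hne12 : ({0, vm} : Set ℕ) ≠ ({0, vp} : Set ℕ) := by
    intro h
    have : vp ∈ ({0, vm} : Set ℕ) := h ▸ (by simp : vp ∈ ({0,vp}:Set ℕ))
    simp at this; omega
  have hne32 : ({0, 1} : Set ℕ) ≠ ({0, vp} : Set ℕ) := by
    intro h
    have : vp ∈ ({0, 1} : Set ℕ) := h ▸ (by simp : vp ∈ ({0,vp}:Set ℕ))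
    simp at this
    rcases this with h | h
    · omega
    · exact hvp1 h
  set Q' : Set (Set ℕ) := Q \ {({0, vp} : Set ℕ), ({1, x} : Set ℕ)} with hQ'
  have hQ'card : Q'.ncard = m - 1 := by
    have hsub : ({({0, vp} : Set ℕ), ({1, x} : Set ℕ)} : Set (Set ℕ)) ⊆ Q := by
      intro B hB; rcases hB with h | h <;> simp_all
    rw [hQ', Set.ncard_diff hsub, Set.ncard_pair hne24, hQc]; omega
  have hQ'fin : Q'.Finite := hQfin.subset (diff_subset)
  have haux := sUnion_ncard_le_two_mul Q' hQ'fin (fun B hB => by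
    have h2 := hcard2 B hB.1
    exact ⟨Set.finite_of_ncard_ne_zero (by omega), by omega⟩)
  have h0mem : (0 : ℕ) ∈ ⋃₀ Q' := ⟨{0, vm}, ⟨hvm, by simp [hne12, hne14]⟩, by simp⟩
  have h1mem : (1 : ℕ) ∈ ⋃₀ Q' := ⟨{0, 1}, ⟨h01, by simp [hne32, hne34]⟩, by simp⟩
  have hsub : ⋃₀ Q ⊆ (⋃₀ Q' ∪ ({vp} : Set ℕ)) ∪ ({x} : Set ℕ) := by
    rintro e ⟨B, hBQ, heB⟩
    by_cases hB' : B ∈ Q'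
    · exact Or.inl (Or.inl ⟨B, hB', heB⟩)
    · have : B = ({0, vp} : Set ℕ) ∨ B = ({1, x} : Set ℕ) := by
        simp only [hQ', mem_diff, not_and, not_not] at hB'
        simpa using hB' hBQ
      rcases this with rfl | rfl
      · rcases heB with rfl | h
        · exact Or.inl (Or.inl h0mem)
        · exact Or.inl (Or.inr h)
      · rcases heB with rfl | h
        · exact Or.inl (Or.inl h1mem)
        · exact Or.inr h
  have hbound : (⋃₀ Q).ncard ≤ (⋃₀ Q').ncard + 1 + 1 := by
    calc (⋃₀ Q).ncard ≤ ((⋃₀ Q' ∪ {vp}) ∪ {x}).ncard :=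
          Set.ncard_le_ncard hsub (((haux.1.union (finite_singleton _)).union (finite_singleton _)))
      _ ≤ (⋃₀ Q' ∪ {vp}).ncard + ({x} : Set ℕ).ncard := Set.ncard_union_le _ _
      _ ≤ (⋃₀ Q').ncard + ({vp} : Set ℕ).ncard + ({x} : Set ℕ).ncard := by
          have := Set.ncard_union_le (⋃₀ Q') ({vp} : Set ℕ); omega
      _ = (⋃₀ Q').ncard + 1 + 1 := by simp
  have := haux.2
  omega

/-- Let `n ≥ 3`, `V = {0, …, n−1}`, and `Q` a partial quasi-pairing of
`V` with distinguished data `(vh, vm, vp)`. If `{0, 1} ∈ Q` and `v̂_Q = 0`, then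
`V ∖ {1}` is a nontrivial module of `Inv(underline(n), Q)`; in particular,
`Inv(underline(n), Q)` is decomposable. -/
theorem stmt_18 (n : ℕ) (hn : 3 ≤ n) (Q : Set (Set ℕ))
    (hQ : IsPartialQuasiPairingOn (Set.Iio n) Q)
    (vh vm vp : ℕ) (hdata : QPData Q vh vm vp)
    (h1 : ({0, 1} : Set ℕ) ∈ Q) (h2 : vh = 0) :
    IsNontrivialModuleOn Q (Set.Iio n) (Set.Iio n \ {1}) ∧
      DecomposableOn Q (Set.Iio n) := by
  subst h2
  obtain ⟨hblk, m, hm, hU, hQc⟩ := hQ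
  obtain ⟨hvm, hvp, hlt⟩ := hdata
  have hkey : ∀ x : ℕ, 2 ≤ x → ({1, x} : Set ℕ) ∉ Q :=
    key_no_block Q m hm (fun B hB => (hblk B hB).2) hU hQc vm vp hvm hvp hlt h1
  have hmod : IsNontrivialModuleOn Q (Set.Iio n) (Set.Iio n \ {1}) := by
    constructor
    · refine ⟨diff_subset, ?_⟩
      intro v hv hvM
      have hv1 : v = 1 := by
        by_contra h
        exact hvM ⟨hv, h⟩
      subst hv1
      left
      intro x hx
      obtain ⟨hxn, hx1⟩ := hx
      simp only [mem_singleton_iff] at hx1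
      rcases Nat.lt_or_ge x 2 with h | h
      · have hx0 : x = 0 := by omega
        subst hx0
        right
        refine ⟨by omega, ?_⟩
        rw [Set.pair_comm]
        exact h1
      · exact Or.inl ⟨by omega, hkey x h⟩
    · rintro (h | ⟨a, h⟩ | h)
      · have : (0 : ℕ) ∈ Set.Iio n \ {1} := ⟨by simp; omega, by simp⟩
        simp [h] at this
      · have h0 : (0 : ℕ) ∈ Set.Iio n \ {1} := ⟨by simp; omega, by simp⟩
        have h2' : (2 : ℕ) ∈ Set.Iio n \ {1} := ⟨by simp; omega, by simp⟩
        rw [h] at h0 h2'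
        simp at h0 h2'
        omega
      · have : (1 : ℕ) ∈ Set.Iio n := by simp; omega
        rw [← h] at this
        exact this.2 rfl
  exact ⟨hmod, ⟨_, hmod⟩⟩
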